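/- Let k be a field of characteristic zero, A a k-vector space with a bilinear product ∗, and let (B, ⋄) be the perm algebra of the specific example (free k-module on (ℤ×ℤ)×{1,2} with the vector-field-type product). Then the induced product · on A ⊗ B is commutative and associative if and only if (A, ∗) is a Zinbiel algebra. -/

import Mathlib

open TensorProduct

noncomputable section

def IsZinbiel {k A : Type} [Field k] [AddCommGroup A] [Module k A]
    (ast : A →ₗ[k] A →ₗ[k] A) : Prop :=
  ∀ a₁ a₂ a₃ : A, ast a₁ (ast a₂ a₃) = ast (ast a₁ a₂) a₃ + ast (ast a₂ a₁) a₃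

def IsPreLie {k A : Type} [Field k] [AddCommGroup A] [Module k A]
    (circ : A →ₗ[k] A →ₗ[k] A) : Prop :=
  ∀ a₁ a₂ a₃ : A,
    circ (circ a₁ a₂) a₃ - circ a₁ (circ a₂ a₃)
      = circ (circ a₂ a₁) a₃ - circ a₂ (circ a₁ a₃)

def IsPerm {k B : Type} [Field k] [AddCommGroup B] [Module k B]
    (dia : B →ₗ[k] B →ₗ[k] B) : Prop :=
  ∀ b₁ b₂ b₃ : B,
    dia b₁ (dia b₂ b₃) = dia (dia b₁ b₂) b₃ ∧
    dia (dia b₁ b₂) b₃ = dia (dia b₂ b₁) b₃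

def IsPrePoisson {k A : Type} [Field k] [AddCommGroup A] [Module k A]
    (ast circ : A →ₗ[k] A →ₗ[k] A) : Prop :=
  IsZinbiel ast ∧ IsPreLie circ ∧
  (∀ a₁ a₂ a₃ : A,
    ast (circ a₁ a₂ - circ a₂ a₁) a₃ = circ a₁ (ast a₂ a₃) - ast a₂ (circ a₁ a₃)) ∧
  (∀ a₁ a₂ a₃ : A,
    circ (ast a₁ a₂ + ast a₂ a₁) a₃ = ast a₁ (circ a₂ a₃) + ast a₂ (circ a₁ a₃))

def IsPoisson {k P : Type} [Field k] [AddCommGroup P] [Module k P]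
    (mul br : P →ₗ[k] P →ₗ[k] P) : Prop :=
  (∀ u v : P, mul u v = mul v u) ∧
  (∀ u v w : P, mul (mul u v) w = mul u (mul v w)) ∧
  (∀ u v : P, br u v = - br v u) ∧
  (∀ u v w : P, br (br u v) w + br (br v w) u + br (br w u) v = 0) ∧
  (∀ u v w : P, br u (mul v w) = mul (br u v) w + mul v (br u w))

def idm (k M : Type) [Field k] [AddCommGroup M] [Module k M] : M →ₗ[k] M :=
  LinearMap.id

def tau (k M : Type) [Field k] [AddCommGroup M] [Module k M] :
    M ⊗[k] M →ₗ[k] M ⊗[k] M :=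
  (TensorProduct.comm k M M).toLinearMap

def unassoc (k M : Type) [Field k] [AddCommGroup M] [Module k M] :
    M ⊗[k] (M ⊗[k] M) →ₗ[k] (M ⊗[k] M) ⊗[k] M :=
  (TensorProduct.assoc k M M M).symm.toLinearMap

def intch (k A B : Type) [Field k] [AddCommGroup A] [Module k A]
    [AddCommGroup B] [Module k B] :
    (A ⊗[k] A) ⊗[k] (B ⊗[k] B) →ₗ[k] (A ⊗[k] B) ⊗[k] (A ⊗[k] B) :=
  (TensorProduct.tensorTensorTensorComm k A A B B).toLinearMap

def IsZinbielCo {k A : Type} [Field k] [AddCommGroup A] [Module k A]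
    (ϑ : A →ₗ[k] A ⊗[k] A) : Prop :=
  ∀ a : A,
    TensorProduct.map ϑ (idm k A) (ϑ a)
      + TensorProduct.map (tau k A) (idm k A) (TensorProduct.map ϑ (idm k A) (ϑ a))
    = unassoc k A (TensorProduct.map (idm k A) ϑ (ϑ a))

def IsPermCo {k B : Type} [Field k] [AddCommGroup B] [Module k B]
    (ν : B →ₗ[k] B ⊗[k] B) : Prop :=
  ∀ b : B,
    TensorProduct.map ν (idm k B) (ν b)
      = unassoc k B (TensorProduct.map (idm k B) ν (ν b)) ∧
    TensorProduct.map ν (idm k B) (ν b)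
      = TensorProduct.map (tau k B) (idm k B) (TensorProduct.map ν (idm k B) (ν b))

def IsPreLieCo {k A : Type} [Field k] [AddCommGroup A] [Module k A]
    (θ : A →ₗ[k] A ⊗[k] A) : Prop :=
  ∀ a : A,
    unassoc k A (TensorProduct.map (idm k A) θ (θ a))
      - TensorProduct.map (tau k A) (idm k A)
          (unassoc k A (TensorProduct.map (idm k A) θ (θ a)))
    = TensorProduct.map θ (idm k A) (θ a)
      - TensorProduct.map (tau k A) (idm k A) (TensorProduct.map θ (idm k A) (θ a))

def Zexp {k A : Type} [Field k] [AddCommGroup A] [Module k A]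
    (ast : A →ₗ[k] A →ₗ[k] A) {p : ℕ} (x y : Fin p → A) : (A ⊗[k] A) ⊗[k] A :=
  ∑ i : Fin p, ∑ j : Fin p,
    (((ast (x i) (x j)) ⊗ₜ[k] (y j)) ⊗ₜ[k] (y i)
      + ((y j) ⊗ₜ[k] (ast (x i) (x j))) ⊗ₜ[k] (y i)
      + ((x i) ⊗ₜ[k] (x j)) ⊗ₜ[k] (ast (y i) (y j))
      + ((x j) ⊗ₜ[k] (x i)) ⊗ₜ[k] (ast (y i) (y j))
      - ((x i) ⊗ₜ[k] (ast (y i) (x j))) ⊗ₜ[k] (y j)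
      - ((x j) ⊗ₜ[k] (ast (x i) (y j))) ⊗ₜ[k] (y i)
      - ((ast (x i) (y j)) ⊗ₜ[k] (x j)) ⊗ₜ[k] (y i)
      - ((ast (y i) (x j)) ⊗ₜ[k] (x i)) ⊗ₜ[k] (y j))

def PLexp {k A : Type} [Field k] [AddCommGroup A] [Module k A]
    (circ : A →ₗ[k] A →ₗ[k] A) {p : ℕ} (x y : Fin p → A) : (A ⊗[k] A) ⊗[k] A :=
  ∑ i : Fin p, ∑ j : Fin p,
    (((circ (x i) (x j)) ⊗ₜ[k] (y j)) ⊗ₜ[k] (y i)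
      + ((x j) ⊗ₜ[k] (circ (x i) (y j))) ⊗ₜ[k] (y i)
      + ((circ (y i) (x j)) ⊗ₜ[k] (x i)) ⊗ₜ[k] (y j)
      + ((x j) ⊗ₜ[k] (x i)) ⊗ₜ[k] (circ (y i) (y j))
      - ((y j) ⊗ₜ[k] (circ (x i) (x j))) ⊗ₜ[k] (y i)
      - ((x i) ⊗ₜ[k] (circ (y i) (x j))) ⊗ₜ[k] (y j)
      - ((circ (x i) (y j)) ⊗ₜ[k] (x j)) ⊗ₜ[k] (y i)
      - ((x i) ⊗ₜ[k] (x j)) ⊗ₜ[k] (circ (y i) (y j)))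

def AYexp {k P : Type} [Field k] [AddCommGroup P] [Module k P]
    (m : P →ₗ[k] P →ₗ[k] P) {ι : Type} [Fintype ι] (u v : ι → P) :
    (P ⊗[k] P) ⊗[k] P :=
  ∑ α : ι, ∑ β : ι,
    (((m (u α) (u β)) ⊗ₜ[k] (v α)) ⊗ₜ[k] (v β)
      + ((u α) ⊗ₜ[k] (m (v α) (u β))) ⊗ₜ[k] (v β)
      - ((u β) ⊗ₜ[k] (u α)) ⊗ₜ[k] (m (v α) (v β)))

def CYexp {k P : Type} [Field k] [AddCommGroup P] [Module k P]
    (br : P →ₗ[k] P →ₗ[k] P) {ι : Type} [Fintype ι] (u v : ι → P) :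
    (P ⊗[k] P) ⊗[k] P :=
  ∑ α : ι, ∑ β : ι,
    (((br (u α) (u β)) ⊗ₜ[k] (v α)) ⊗ₜ[k] (v β)
      + ((u α) ⊗ₜ[k] (u β)) ⊗ₜ[k] (br (v α) (v β))
      + ((u α) ⊗ₜ[k] (br (v α) (u β))) ⊗ₜ[k] (v β))

def sharp (k : Type) [Field k] {V : Type} [AddCommGroup V] [Module k V]
    (s : V ⊗[k] V) (ξ : V →ₗ[k] k) : V :=
  TensorProduct.lid k V (LinearMap.rTensor V ξ s)

abbrev PermB (k : Type) [Field k] : Type := ((ℤ × ℤ) × Fin 2) →₀ k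

def bB (k : Type) [Field k] (i₁ i₂ : ℤ) (s : Fin 2) : PermB k :=
  Finsupp.single ((i₁, i₂), s) 1

theorem statement2 (k A : Type) [Field k] [CharZero k]
    [AddCommGroup A] [Module k A]
    (ast : A →ₗ[k] A →ₗ[k] A)
    (dia : PermB k →ₗ[k] PermB k →ₗ[k] PermB k)
    (hdia : ∀ (i₁ i₂ j₁ j₂ : ℤ) (s t : Fin 2),
      dia (bB k i₁ i₂ s) (bB k j₁ j₂ t)
        = if s = 0 then bB k (i₁ + j₁ + 1) (i₂ + j₂) t
          else bB k (i₁ + j₁) (i₂ + j₂ + 1) t)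
    (m : A ⊗[k] PermB k →ₗ[k] A ⊗[k] PermB k →ₗ[k] A ⊗[k] PermB k)
    (hm : ∀ (a₁ a₂ : A) (b₁ b₂ : PermB k),
      m (a₁ ⊗ₜ[k] b₁) (a₂ ⊗ₜ[k] b₂)
        = (ast a₁ a₂) ⊗ₜ[k] (dia b₁ b₂) + (ast a₂ a₁) ⊗ₜ[k] (dia b₂ b₁))
    :
    ((∀ u v : A ⊗[k] PermB k, m u v = m v u) ∧
    (∀ u v w : A ⊗[k] PermB k, m (m u v) w = m u (m v w)))
      ↔ IsZinbiel ast := by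
  constructor
  · rintro ⟨hcomm, hassoc⟩
    intro a₁ a₂ a₃
    have h := hassoc (a₁ ⊗ₜ[k] bB k 0 0 0) (a₂ ⊗ₜ[k] bB k 0 0 0) (a₃ ⊗ₜ[k] bB k 0 0 1)
    have hne : ((1:Fin 2) = 0) = False := by decide
    have heq : ((0:Fin 2) = 0) = True := by decide
    simp only [hm, hdia, map_add, LinearMap.add_apply, hne, heq, if_true, if_false] at h
    have h2 := congrArg (fun z => (TensorProduct.rid k A)
      ((LinearMap.lTensor A (Finsupp.lapply (((2:ℤ),(0:ℤ)), (1:Fin 2)) : PermB k →ₗ[k] k)) z)) h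
    simp only [map_add, LinearMap.lTensor_tmul, Finsupp.lapply_apply, bB,
      Finsupp.single_apply, TensorProduct.rid_tmul, Prod.mk.injEq] at h2
    norm_num at h2
    exact h2.symm
  · intro hz
    have sbb : ∀ (i₁ i₂ : ℤ) (s : Fin 2), Finsupp.single ((i₁,i₂),s) (1:k) = bB k i₁ i₂ s :=
      fun _ _ _ => rfl
    have hA0 : ∀ (p q r : (ℤ×ℤ)×Fin 2),
        dia (Finsupp.single p (1:k)) (dia (Finsupp.single q 1) (Finsupp.single r 1))
          = dia (dia (Finsupp.single p 1) (Finsupp.single q 1)) (Finsupp.single r 1) := by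
      rintro ⟨⟨i₁,i₂⟩,s⟩ ⟨⟨j₁,j₂⟩,t⟩ ⟨⟨l₁,l₂⟩,u⟩
      simp only [sbb]
      fin_cases s <;> fin_cases t <;> simp [hdia] <;> ring_nf
    have hC0 : ∀ (p q r : (ℤ×ℤ)×Fin 2),
        dia (dia (Finsupp.single p (1:k)) (Finsupp.single q 1)) (Finsupp.single r 1)
          = dia (dia (Finsupp.single q 1) (Finsupp.single p 1)) (Finsupp.single r 1) := by
      rintro ⟨⟨i₁,i₂⟩,s⟩ ⟨⟨j₁,j₂⟩,t⟩ ⟨⟨l₁,l₂⟩,u⟩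
      simp only [sbb]
      fin_cases s <;> fin_cases t <;> simp [hdia] <;> ring_nf
    have hA : ∀ b₁ b₂ b₃ : PermB k, dia b₁ (dia b₂ b₃) = dia (dia b₁ b₂) b₃ := by
      intro b₁ b₂ b₃
      induction b₁ using Finsupp.induction_linear with
      | zero => simp
      | add f g hf hg => simp [map_add, LinearMap.add_apply, hf, hg]
      | single p c =>
        induction b₂ using Finsupp.induction_linear with
        | zero => simp
        | add f g hf hg => simp [map_add, LinearMap.add_apply, hf, hg]
        | single q d =>
          induction b₃ using Finsupp.induction_linear with
          | zero => simp
          | add f g hf hg => simp [map_add, hf, hg]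
          | single r e =>
            rw [← Finsupp.smul_single_one p c, ← Finsupp.smul_single_one q d,
              ← Finsupp.smul_single_one r e]
            simp only [map_smul, LinearMap.smul_apply, hA0]
    have hC : ∀ b₁ b₂ b₃ : PermB k, dia (dia b₁ b₂) b₃ = dia (dia b₂ b₁) b₃ := by
      intro b₁ b₂ b₃
      induction b₁ using Finsupp.induction_linear with
      | zero => simp
      | add f g hf hg => simp [map_add, LinearMap.add_apply, hf, hg]
      | single p c =>
        induction b₂ using Finsupp.induction_linear with
        | zero => simp
        | add f g hf hg => simp [map_add, LinearMap.add_apply, hf, hg]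
        | single q d =>
          induction b₃ using Finsupp.induction_linear with
          | zero => simp
          | add f g hf hg => simp [map_add, hf, hg]
          | single r e =>
            rw [← Finsupp.smul_single_one p c, ← Finsupp.smul_single_one q d,
              ← Finsupp.smul_single_one r e]
            simp only [map_smul, LinearMap.smul_apply]
            rw [smul_comm c d]
            rw [hC0]
    constructor
    · intro u v
      induction u using TensorProduct.induction_on with
      | zero => simp
      | add x y hx hy => simp [map_add, LinearMap.add_apply, hx, hy]
      | tmul a b =>
        induction v using TensorProduct.induction_on with
        | zero => simp
        | add x y hx hy => simp [map_add, LinearMap.add_apply, hx, hy]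
        | tmul a' b' => rw [hm, hm]; abel
    · have key : ∀ (a₁ a₂ a₃ : A) (b₁ b₂ b₃ : PermB k),
          m (m (a₁ ⊗ₜ[k] b₁) (a₂ ⊗ₜ[k] b₂)) (a₃ ⊗ₜ[k] b₃)
            = m (a₁ ⊗ₜ[k] b₁) (m (a₂ ⊗ₜ[k] b₂) (a₃ ⊗ₜ[k] b₃)) := by
        intro a₁ a₂ a₃ b₁ b₂ b₃
        have hz' : ∀ x y z : A, ast x (ast y z) = ast (ast x y) z + ast (ast y x) z := hz
        simp only [hm, map_add, LinearMap.add_apply]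
        simp only [hz', hA, add_tmul]
        rw [hC b₂ b₁ b₃, hC b₂ b₃ b₁, hC b₁ b₃ b₂]
        abel
      intro u v w
      induction u using TensorProduct.induction_on with
      | zero => simp
      | add x y hx hy => simp [map_add, LinearMap.add_apply, hx, hy]
      | tmul a₁ b₁ =>
        induction v using TensorProduct.induction_on with
        | zero => simp
        | add x y hx hy => simp [map_add, LinearMap.add_apply, hx, hy]
        | tmul a₂ b₂ =>
          induction w using TensorProduct.induction_on with
          | zero => simp
          | add x y hx hy => simp [map_add, hx, hy]
          | tmul a₃ b₃ => exact key a₁ a₂ a₃ b₁ b₂ b₃
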